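/- Let S_t denote the free transport semigroup on 𝕋 × ℝ (the 1-torus of length 1), (S_t f)(x,v) = f(x − tv, v), and for c > 0 let P_c f(x,v) := c·1_{|v|≤1} ∫_ℝ f(x,u) du. Then for any (x₀,v₀) ∈ 𝕋 × ℝ and any 0 < r < s with s − r ≥ 1, one has P_c S_{s−r} P_c S_r δ_{(x₀,v₀)} ≥ (c²/(s−r)) · 1_{|v| ≤ 1} as measures, i.e. the double collision-transport composition of a Dirac mass dominates a multiple of the uniform-in-x indicator on |v| ≤ 1. -/

import Mathlib

open MeasureTheory

instance : Fact ((0 : ℝ) < 1) := ⟨one_pos⟩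

/-- Free transport acting on measures on `𝕋 × ℝ` (torus of length 1):
the pushforward by `(x,v) ↦ (x + tv, v)`, corresponding to `(S_t f)(x,v) = f(x - tv, v)`. -/
noncomputable def freeTransport (t : ℝ) (μ : Measure (AddCircle (1 : ℝ) × ℝ)) :
    Measure (AddCircle (1 : ℝ) × ℝ) :=
  μ.map (fun q => (q.1 + (((t * q.2 : ℝ) : ℝ) : AddCircle (1 : ℝ)), q.2))

/-- The operator `P_c`: `(P_c f)(x,v) = c·1_{|v|≤1} ∫ f(x,u) du`, acting on measures as the
product of the spatial marginal with the measure `c·1_{|v|≤1} dv`. -/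
noncomputable def collisionOp (c : ℝ) (μ : Measure (AddCircle (1 : ℝ) × ℝ)) :
    Measure (AddCircle (1 : ℝ) × ℝ) :=
  (μ.map Prod.fst).prod ((ENNReal.ofReal c) • volume.restrict {v : ℝ | |v| ≤ 1})

section Aux

variable {α β : Type*} [MeasurableSpace α] [MeasurableSpace β]

lemma aux_prod_mono_left {μ μ' : Measure α} (ν : Measure β) [SFinite ν] (h : μ ≤ μ') :
    μ.prod ν ≤ μ'.prod ν := by
  refine Measure.le_intro fun s hs _ => ?_
  rw [Measure.prod_apply hs, Measure.prod_apply hs]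
  exact lintegral_mono' h le_rfl

lemma aux_smul_prod (k : ENNReal) (μ : Measure α) (ν : Measure β) [SFinite ν] :
    (k • μ).prod ν = k • μ.prod ν := by
  ext s hs
  rw [Measure.smul_apply, Measure.prod_apply hs, Measure.prod_apply hs, lintegral_smul_measure,
    smul_eq_mul]

lemma aux_prod_smul (k : ENNReal) (hk : k ≠ ⊤) (μ : Measure α) (ν : Measure β) [SFinite ν] :
    μ.prod (k • ν) = k • μ.prod ν := by
  ext s hs
  rw [Measure.smul_apply, Measure.prod_apply hs, Measure.prod_apply hs, smul_eq_mul,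
    ← lintegral_const_mul' _ _ hk]
  simp

end Aux

/-- Doeblin lower bound: for `s - r ≥ 1` the composition `P_c S_{s-r} P_c S_r` applied to
a Dirac mass dominates `(c²/(s−r))·1_{|v|≤1}` (uniform in `x` on the torus). -/
theorem doeblin_lower_bound (c r s : ℝ) (hc : 0 < c) (hr : 0 < r) (hrs : r < s)
    (h1 : 1 ≤ s - r) (x₀ : AddCircle (1 : ℝ)) (v₀ : ℝ) :
    (ENNReal.ofReal (c ^ 2 / (s - r))) •
        ((volume : Measure (AddCircle (1 : ℝ))).prod (volume.restrict {v : ℝ | |v| ≤ 1})) ≤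
      collisionOp c (freeTransport (s - r) (collisionOp c (freeTransport r
        (Measure.dirac (x₀, v₀))))) := by
  set τ : ℝ := s - r with hτdef
  have hτ0 : (0 : ℝ) < τ := lt_of_lt_of_le one_pos h1
  set B : Set ℝ := {v : ℝ | |v| ≤ 1} with hB
  set ν : Measure ℝ := (ENNReal.ofReal c) • volume.restrict B with hν
  -- measurability of the transport maps
  have hmk : Measurable ((↑) : ℝ → AddCircle (1 : ℝ)) :=
    AddCircle.measurable_mk'
  have hmap : ∀ t : ℝ, Measurable
      (fun q : AddCircle (1 : ℝ) × ℝ =>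
        (q.1 + (((t * q.2 : ℝ) : ℝ) : AddCircle (1 : ℝ)), q.2)) := by
    intro t
    exact ((measurable_fst.add (hmk.comp (measurable_const.mul measurable_snd)))).prodMk
      measurable_snd
  -- Step 1 : S_r dirac = dirac
  set x₁ : AddCircle (1 : ℝ) := x₀ + ((r * v₀ : ℝ) : AddCircle (1 : ℝ)) with hx₁
  have h1' : freeTransport r (Measure.dirac (x₀, v₀)) = Measure.dirac (x₁, v₀) := by
    rw [freeTransport, Measure.map_dirac' (hmap r)]
  -- Step 2 : P_c dirac = dirac.prod ν
  have h2 : collisionOp c (Measure.dirac (x₁, v₀)) = (Measure.dirac x₁).prod ν := by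
    rw [collisionOp, Measure.map_dirac' measurable_fst]
  -- Step 3 : the final measure is (ν.map h).prod ν with h v = x₁ + τ v
  have h3 : collisionOp c (freeTransport τ ((Measure.dirac x₁).prod ν)) =
      (ν.map (fun v : ℝ => x₁ + ((τ * v : ℝ) : AddCircle (1 : ℝ)))).prod ν := by
    rw [collisionOp, freeTransport, Measure.map_map measurable_fst (hmap τ),
      Measure.dirac_prod, Measure.map_map (measurable_fst.comp (hmap τ)) measurable_prodMk_left]
    rfl
  rw [h1', h2, h3]
  -- lower bound for the first marginal
  obtain ⟨a, ha⟩ : ∃ a : ℝ, (a : AddCircle (1 : ℝ)) = x₁ := Quotient.exists_rep x₁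
  set f : ℝ → ℝ := fun v => (a - τ) + τ * (v + 1) with hf
  have hfeq : ∀ v : ℝ, x₁ + ((τ * v : ℝ) : AddCircle (1 : ℝ)) = ((f v : ℝ) : AddCircle (1 : ℝ)) := by
    intro v
    rw [← ha]
    show (↑a + (((τ * v : ℝ) : ℝ) : AddCircle (1:ℝ)) : AddCircle (1:ℝ)) =
      (((a - τ) + τ * (v + 1) : ℝ) : AddCircle (1:ℝ))
    have h : (a - τ) + τ * (v + 1) = a + τ * v := by ring
    rw [h, AddCircle.coe_add]
  have hmeq : ν.map (fun v : ℝ => x₁ + ((τ * v : ℝ) : AddCircle (1 : ℝ))) =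
      (ν.map f).map ((↑) : ℝ → AddCircle (1 : ℝ)) := by
    rw [Measure.map_map hmk (by fun_prop)]
    exact congrArg (fun g => Measure.map g ν) (funext hfeq)
  -- f as measurable embedding (affine)
  have hτne : τ ≠ 0 := ne_of_gt hτ0
  have hIsub : Set.Ioc (-1 : ℝ) (-1 + τ⁻¹) ⊆ B := by
    intro v hv
    rw [hB, Set.mem_setOf_eq, abs_le]
    constructor
    · exact le_of_lt hv.1
    · calc v ≤ -1 + τ⁻¹ := hv.2
        _ ≤ -1 + 1 := by
            have : τ⁻¹ ≤ 1 := by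
              rw [inv_le_one_iff₀]; right; exact h1
            linarith
        _ ≤ 1 := by norm_num
  have hτne : τ ≠ 0 := ne_of_gt hτ0
  -- f is a measurable embedding
  have hemb : MeasurableEmbedding f :=
    ((Homeomorph.addRight (1:ℝ)).trans ((Homeomorph.mulLeft₀ τ hτne).trans
      (Homeomorph.addLeft (a - τ)))).measurableEmbedding
  -- preimage of the fundamental interval
  have hpre : f ⁻¹' Set.Ioc (a - τ) (a - τ + 1) = Set.Ioc (-1 : ℝ) (-1 + τ⁻¹) := by
    have hc2 : f = (fun x => (a - τ) + x) ∘ (fun x : ℝ => τ * x) ∘ (fun x : ℝ => x + 1) := rfl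
    rw [hc2, Set.preimage_comp, Set.preimage_comp, Set.preimage_const_add_Ioc,
      Set.preimage_const_mul_Ioc₀ _ _ hτ0, Set.preimage_add_const_Ioc]
    congr 1 <;> field_simp <;> ring_nf
  -- image of Lebesgue under f
  have hmapf : (volume : Measure ℝ).map f = ENNReal.ofReal τ⁻¹ • volume := by
    have hc2 : f = (fun x => (a - τ) + x) ∘ ((fun x : ℝ => τ * x) ∘ (fun x : ℝ => x + 1)) := rfl
    rw [hc2, ← Measure.map_map (measurable_const_add _) (by fun_prop),
      ← Measure.map_map (measurable_const_mul τ) (measurable_add_const 1),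
      map_add_right_eq_self volume 1, Real.map_volume_mul_left hτne,
      Measure.map_smul, map_add_left_eq_self volume (a - τ), abs_inv, abs_of_pos hτ0]
  have hrestr : (volume.restrict (Set.Ioc (-1:ℝ) (-1 + τ⁻¹))).map f
      = ENNReal.ofReal τ⁻¹ • volume.restrict (Set.Ioc (a - τ) (a - τ + 1)) := by
    rw [← hpre, ← hemb.restrict_map, hmapf, Measure.restrict_smul]
  have hcirc : (volume.restrict (Set.Ioc (a - τ) (a - τ + 1))).map ((↑) : ℝ → AddCircle (1:ℝ))
      = (volume : Measure (AddCircle (1:ℝ))) :=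
    (AddCircle.measurePreserving_mk (T := (1:ℝ)) (a - τ)).map_eq
  -- lower bound on the spatial marginal
  have hmarg : (ENNReal.ofReal c * ENNReal.ofReal τ⁻¹) • (volume : Measure (AddCircle (1:ℝ)))
      ≤ ν.map (fun v : ℝ => x₁ + ((τ * v : ℝ) : AddCircle (1:ℝ))) := by
    rw [hmeq]
    have step1 : volume.restrict (Set.Ioc (-1:ℝ) (-1 + τ⁻¹)) ≤ volume.restrict B :=
      Measure.restrict_mono hIsub le_rfl
    have step2 : ((ENNReal.ofReal c) • volume.restrict (Set.Ioc (-1:ℝ) (-1 + τ⁻¹))).map f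
        ≤ ν.map f := by
      rw [hν]
      refine Measure.map_mono ?_ hemb.measurable
      refine Measure.le_intro fun t ht _ => ?_
      simp only [Measure.smul_apply, smul_eq_mul]
      exact mul_le_mul_right (Measure.le_iff'.1 step1 t) _
    have heq2 : (((ENNReal.ofReal c) • volume.restrict (Set.Ioc (-1:ℝ) (-1 + τ⁻¹))).map f).map
        ((↑) : ℝ → AddCircle (1:ℝ))
        = (ENNReal.ofReal c * ENNReal.ofReal τ⁻¹) • (volume : Measure (AddCircle (1:ℝ))) := by
      rw [Measure.map_smul, hrestr, Measure.map_smul, Measure.map_smul, hcirc, smul_smul]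
    rw [← heq2]
    exact Measure.map_mono step2 hmk
  -- assemble
  have hsc : ENNReal.ofReal (c ^ 2 / τ)
      = (ENNReal.ofReal c * ENNReal.ofReal τ⁻¹) * ENNReal.ofReal c := by
    rw [← ENNReal.ofReal_mul hc.le, ← ENNReal.ofReal_mul (by positivity)]
    congr 1
    field_simp
  rw [hsc]
  calc ((ENNReal.ofReal c * ENNReal.ofReal τ⁻¹) * ENNReal.ofReal c) •
        ((volume : Measure (AddCircle (1:ℝ))).prod (volume.restrict B))
      = (ENNReal.ofReal c * ENNReal.ofReal τ⁻¹) •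
          ((volume : Measure (AddCircle (1:ℝ))).prod ν) := by
        rw [hν, aux_prod_smul (ENNReal.ofReal c) ENNReal.ofReal_ne_top, smul_smul]
    _ = ((ENNReal.ofReal c * ENNReal.ofReal τ⁻¹) • (volume : Measure (AddCircle (1:ℝ)))).prod ν :=
        (aux_smul_prod _ _ _).symm
    _ ≤ (ν.map (fun v : ℝ => x₁ + ((τ * v : ℝ) : AddCircle (1:ℝ)))).prod ν :=
        aux_prod_mono_left ν hmarg
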